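/- Let G be a connected graph with N vertices and let k ≥ 1. The number of k-forests of G is at most C(N−1, k−1) times the number of spanning trees of G, where C(·,·) denotes the binomial coefficient. (Every k-forest is obtained from some spanning tree by deleting k−1 of its N−1 edges.) -/

import Mathlib

/-- `T` is a spanning tree of `G`, given by its edge set: the spanning subgraph
with edge set `T` is a tree (connected and acyclic). -/
def IsSpanningTreeOf {V : Type*} (G : SimpleGraph V) (T : Set (Sym2 V)) : Prop :=
  T ⊆ G.edgeSet ∧ (SimpleGraph.fromEdgeSet T).IsTree

/-- `F` is a `k`-forest of `G`: a spanning subgraph (given by its edge set) that is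
acyclic and has exactly `k` connected components. -/
def IsKForestOf {V : Type*} (G : SimpleGraph V) (k : ℕ) (F : Set (Sym2 V)) : Prop :=
  F ⊆ G.edgeSet ∧ (SimpleGraph.fromEdgeSet F).IsAcyclic ∧
    Nat.card (SimpleGraph.fromEdgeSet F).ConnectedComponent = k


section Aux


open SimpleGraph
variable {V : Type*}


/-- Acyclicity is antitone. -/
lemma isAcyclic_anti {H H' : SimpleGraph V} (hle : H ≤ H') (h : H'.IsAcyclic) : H.IsAcyclic :=
  fun _ c hc => h (c.mapLe hle) (hc.mapLe hle)

/-- Adding an edge between unreachable vertices preserves acyclicity. -/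
lemma isAcyclic_sup_edge {H : SimpleGraph V} (hH : H.IsAcyclic) {s t : V}
    (hne : s ≠ t) (hst : ¬H.Reachable s t) : (H ⊔ edge s t).IsAcyclic := by
  intro u c hc
  by_cases he : s(s, t) ∈ c.edges
  · have := (adj_and_reachable_delete_edges_iff_exists_cycle (G := H ⊔ edge s t)).2
      ⟨u, c, hc, he⟩
    refine hst (this.2.mono ?_)
    rw [edge]
    exact fun a b hab => by
      simp only [deleteEdges_adj, sdiff_adj, sup_adj, fromEdgeSet_adj, Set.mem_singleton_iff] at hab
      tauto
  · refine hH (c.transfer H ?_) (hc.transfer _)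
    intro e hec
    have := c.edges_subset_edgeSet hec
    rw [edgeSet_sup, edge_edgeSet_of_ne hne] at this
    rcases this with h1 | h1
    · exact h1
    · exact absurd (h1 ▸ hec) he


lemma reachable_sup_edge {H : SimpleGraph V} {s t : V} (hst : ¬H.Reachable s t)
    {u v : V} (h : (H ⊔ edge s t).Reachable u v) :
    H.Reachable u v ∨ (H.Reachable u s ∧ H.Reachable t v) ∨
      (H.Reachable u t ∧ H.Reachable s v) := by
  obtain ⟨p⟩ := h
  induction p with
  | nil => exact Or.inl (Reachable.refl _)
  | cons hadj q ih =>
    rename_i a b c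
    rcases hadj with hH | hE
    · have hab : H.Reachable a b := hH.reachable
      rcases ih with h1 | ⟨h1, h2⟩ | ⟨h1, h2⟩
      · exact Or.inl (hab.trans h1)
      · exact Or.inr (Or.inl ⟨hab.trans h1, h2⟩)
      · exact Or.inr (Or.inr ⟨hab.trans h1, h2⟩)
    · rw [edge_adj] at hE
      rcases hE.1 with ⟨rfl, rfl⟩ | ⟨rfl, rfl⟩
      · rcases ih with h1 | ⟨h1, h2⟩ | ⟨h1, h2⟩
        · exact Or.inr (Or.inl ⟨Reachable.refl _, h1⟩)
        · exact absurd h1.symm hst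
        · exact Or.inl h2
      · rcases ih with h1 | ⟨h1, h2⟩ | ⟨h1, h2⟩
        · exact Or.inr (Or.inr ⟨Reachable.refl _, h1⟩)
        · exact Or.inl h2
        · exact absurd h1 hst

lemma card_cc_sup_edge [Finite V] {H : SimpleGraph V} {s t : V}
    (hne : s ≠ t) (hst : ¬H.Reachable s t) :
    Nat.card H.ConnectedComponent = Nat.card (H ⊔ edge s t).ConnectedComponent + 1 := by
  classical
  set H' := H ⊔ edge s t with hH'
  have hle : H ≤ H' := le_sup_left
  set f : H.ConnectedComponent → H'.ConnectedComponent :=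
    ConnectedComponent.map (Hom.ofLE hle) with hf
  have hfmk : ∀ v : V, f (H.connectedComponentMk v) = H'.connectedComponentMk v := fun v => rfl
  set d := H.connectedComponentMk t with hd
  set c := H.connectedComponentMk s with hc
  have hcd : c ≠ d := fun h => hst (ConnectedComponent.exact h)
  have hfcd : f c = f d := by
    rw [hfmk, hfmk]
    exact ConnectedComponent.sound (Adj.reachable (by simp [hH', edge_adj, hne]))
  -- the restriction of f to the complement of {d} is a bijection
  have hbij : Function.Bijective (fun x : {x : H.ConnectedComponent // x ≠ d} => f x.1) := by
    constructor
    · rintro ⟨x, hx⟩ ⟨y, hy⟩ hxy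
      simp only at hxy
      obtain ⟨a, rfl⟩ := x.exists_rep
      obtain ⟨b, rfl⟩ := y.exists_rep
      have : H'.Reachable a b := ConnectedComponent.exact hxy
      rcases reachable_sup_edge hst this with h1 | ⟨h1, h2⟩ | ⟨h1, h2⟩
      · exact Subtype.ext (ConnectedComponent.sound h1)
      · exact absurd (ConnectedComponent.sound h2.symm) hy
      · exact absurd (ConnectedComponent.sound h1) hx
    · intro z
      obtain ⟨v, rfl⟩ := z.exists_rep
      by_cases hv : H.connectedComponentMk v = d
      · exact ⟨⟨c, hcd⟩, by show f c = _; rw [hfcd, ← hv, hfmk]; rfl⟩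
      · exact ⟨⟨_, hv⟩, hfmk v⟩
  have h1 : Nat.card {x : H.ConnectedComponent // x ≠ d} =
      Nat.card H'.ConnectedComponent := Nat.card_eq_of_bijective _ hbij
  haveI : Unique {x : H.ConnectedComponent // x = d} :=
    ⟨⟨⟨d, rfl⟩⟩, by rintro ⟨x, rfl⟩; rfl⟩
  have h3 : Nat.card {x : H.ConnectedComponent // x = d} = 1 := Nat.card_unique
  have h2 : Nat.card {x : H.ConnectedComponent // x = d} +
      Nat.card {x : H.ConnectedComponent // ¬ x = d} = Nat.card H.ConnectedComponent := by
    rw [← Nat.card_sum]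
    exact Nat.card_congr (Equiv.sumCompl _)
  have h4 : Nat.card {x : H.ConnectedComponent // ¬ x = d} =
      Nat.card {x : H.ConnectedComponent // x ≠ d} := rfl
  omega



lemma card_cc_bot [Fintype V] :
    Nat.card (⊥ : SimpleGraph V).ConnectedComponent = Fintype.card V := by
  rw [← Nat.card_eq_fintype_card]
  symm
  apply Nat.card_eq_of_bijective (fun v => (⊥ : SimpleGraph V).connectedComponentMk v)
  constructor
  · intro a b hab
    exact reachable_bot.mp (ConnectedComponent.exact hab)
  · intro z
    exact z.exists_rep

lemma acyclic_card [Fintype V] {H : SimpleGraph V} (hH : H.IsAcyclic) :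
    H.edgeSet.ncard + Nat.card H.ConnectedComponent = Fintype.card V := by
  classical
  suffices h : ∀ (n : ℕ) (H : SimpleGraph V), H.IsAcyclic → H.edgeSet.ncard = n →
      H.edgeSet.ncard + Nat.card H.ConnectedComponent = Fintype.card V from
    h _ H hH rfl
  intro n
  induction n using Nat.strong_induction_on with
  | _ n ih =>
    intro H hH hcard
    rcases Nat.eq_zero_or_pos n with rfl | hn
    · have : H.edgeSet = ∅ := (Set.ncard_eq_zero (Set.toFinite _)).mp hcard
      rw [edgeSet_eq_empty] at this
      subst this
      rw [edgeSet_bot, Set.ncard_empty, zero_add]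
      exact card_cc_bot
    · -- pick an edge
      have hne : H.edgeSet.Nonempty := by
        rw [Set.nonempty_iff_ne_empty]
        intro h
        rw [h, Set.ncard_empty] at hcard
        omega
      obtain ⟨e, he⟩ := hne
      induction e using Sym2.ind with
      | _ a b =>
        have hadj : H.Adj a b := he
        have hab : a ≠ b := hadj.ne
        set H' := H \ fromEdgeSet {s(a, b)} with hH'def
        have hbr : H.IsBridge s(a, b) := (isAcyclic_iff_forall_adj_isBridge.mp hH) hadj
        have hreach : ¬H'.Reachable a b := hbr
        have hsup : H' ⊔ edge a b = H := by
          ext u v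
          simp only [sup_adj, sdiff_adj, fromEdgeSet_adj, Set.mem_singleton_iff, edge_adj]
          constructor
          · rintro (⟨h1, _⟩ | ⟨h1, h2⟩)
            · exact h1
            · rcases h1 with ⟨rfl, rfl⟩ | ⟨rfl, rfl⟩
              · exact hadj
              · exact hadj.symm
          · intro h1
            by_cases h2 : s(u, v) = s(a, b)
            · rw [Sym2.eq_iff] at h2
              exact Or.inr ⟨h2, h1.ne⟩
            · exact Or.inl ⟨h1, fun hc => h2 hc.1⟩
        have hle : H' ≤ H := sdiff_le
        have hH'acyclic : H'.IsAcyclic := fun _ c hc => hH (c.mapLe hle) (hc.mapLe hle)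
        have hedge : H'.edgeSet = H.edgeSet \ {s(a, b)} := by
          rw [hH'def, edgeSet_sdiff, edgeSet_fromEdgeSet]
          ext e
          simp only [Set.mem_diff, Set.mem_singleton_iff, Set.mem_setOf_eq]
          constructor
          · rintro ⟨h1, h2⟩
            exact ⟨h1, fun hc => h2 ⟨hc, by rw [hc]; simp [Sym2.isDiag_iff_proj_eq, hab]⟩⟩
          · rintro ⟨h1, h2⟩
            exact ⟨h1, fun hc => h2 hc.1⟩
        have hcard' : H'.edgeSet.ncard = n - 1 := by
          rw [hedge, Set.ncard_diff_singleton_of_mem he, hcard]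
        have hcc : Nat.card H'.ConnectedComponent =
            Nat.card H.ConnectedComponent + 1 := by
          have := card_cc_sup_edge (H := H') hab hreach
          rwa [hsup] at this
        have := ih (n - 1) (by omega) H' hH'acyclic hcard'
        rw [hcard', hcc] at this
        rw [hcard]
        omega

lemma exists_adj_not_reachable {G H : SimpleGraph V} {a b : V} (p : G.Walk a b)
    (hab : ¬H.Reachable a b) : ∃ u v, G.Adj u v ∧ ¬H.Reachable u v := by
  induction p with
  | nil => exact absurd (Reachable.refl _) hab
  | cons hadj q ih =>
    rename_i x y z
    by_cases hr : H.Reachable x y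
    · exact ih (fun hyz => hab (hr.trans hyz))
    · exact ⟨x, y, hadj, hr⟩

lemma exists_spanning_tree_ext [Fintype V] {G : SimpleGraph V} (hG : G.Connected)
    {F : Set (Sym2 V)} (hFG : F ⊆ G.edgeSet) (hF : (fromEdgeSet F).IsAcyclic) :
    ∃ T, F ⊆ T ∧ IsSpanningTreeOf G T := by
  classical
  set S : Set (Set (Sym2 V)) :=
    {T | F ⊆ T ∧ T ⊆ G.edgeSet ∧ (fromEdgeSet T).IsAcyclic} with hS
  have hFS : F ∈ S := ⟨le_refl _, hFG, hF⟩
  obtain ⟨T, hTS, hTmax⟩ := Set.Finite.exists_maximalFor Set.ncard S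
    (Set.toFinite S) ⟨F, hFS⟩
  obtain ⟨hFT, hTG, hTacyclic⟩ := hTS
  refine ⟨T, hFT, hTG, ?_, hTacyclic⟩
  haveI : Nonempty V := hG.nonempty
  constructor
  intro a b
  by_contra hr
  obtain ⟨p⟩ := hG.preconnected a b
  obtain ⟨u, v, huv, hur⟩ := exists_adj_not_reachable (H := fromEdgeSet T) p hr
  have huvne : u ≠ v := huv.ne
  have hnotmem : s(u, v) ∉ T := by
    intro hmem
    exact hur (Adj.reachable (by rw [fromEdgeSet_adj]; exact ⟨hmem, huvne⟩))
  have hT' : insert s(u, v) T ∈ S := by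
    refine ⟨hFT.trans (Set.subset_insert _ _), ?_, ?_⟩
    · exact Set.insert_subset ((mem_edgeSet G).mpr huv) hTG
    · have : fromEdgeSet (insert s(u, v) T) = fromEdgeSet T ⊔ edge u v := by
        rw [Set.insert_eq, Set.union_comm, fromEdgeSet_union]
        rfl
      rw [this]
      exact isAcyclic_sup_edge hTacyclic huvne hur
  have := hTmax hT' (by
    exact Set.ncard_le_ncard (Set.subset_insert _ _) (Set.toFinite _))
  rw [Set.ncard_insert_of_notMem hnotmem (Set.toFinite _)] at this
  omega
lemma card_cc_connected {H : SimpleGraph V} (h : H.Connected) :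
    Nat.card H.ConnectedComponent = 1 := by
  haveI : Nonempty V := h.nonempty
  obtain ⟨v⟩ := ‹Nonempty V›
  haveI : Unique H.ConnectedComponent :=
    ⟨⟨H.connectedComponentMk v⟩, by
      intro c
      obtain ⟨w, rfl⟩ := c.exists_rep
      exact ConnectedComponent.sound (h.preconnected w v)⟩
  exact Nat.card_unique

lemma edgeSet_fromEdgeSet_of_subset {G : SimpleGraph V} {F : Set (Sym2 V)}
    (hFG : F ⊆ G.edgeSet) : (fromEdgeSet F).edgeSet = F := by
  rw [edgeSet_fromEdgeSet]
  ext e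
  simp only [Set.mem_diff, Set.mem_setOf_eq]
  exact ⟨fun h => h.1, fun h => ⟨h, G.not_isDiag_of_mem_edgeSet (hFG h)⟩⟩

theorem stmt5' {V : Type*} [Fintype V] (G : SimpleGraph V) (hG : G.Connected)
    (k : ℕ) (hk : 1 ≤ k) :
    {F : Set (Sym2 V) | IsKForestOf G k F}.ncard ≤
      Nat.choose (Fintype.card V - 1) (k - 1) *
        {T : Set (Sym2 V) | IsSpanningTreeOf G T}.ncard := by
  classical
  set N := Fintype.card V with hN
  -- facts about trees
  have htree : ∀ T : Set (Sym2 V), IsSpanningTreeOf G T → T.ncard + 1 = N := by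
    intro T ⟨hTG, hT⟩
    have := acyclic_card hT.IsAcyclic
    rwa [edgeSet_fromEdgeSet_of_subset hTG, card_cc_connected hT.isConnected] at this
  -- choice of spanning tree extension
  set Φ : Set (Sym2 V) → Set (Sym2 V) × Set (Sym2 V) := fun F =>
    if h : IsKForestOf G k F then
      ((exists_spanning_tree_ext hG h.1 h.2.1).choose,
       (exists_spanning_tree_ext hG h.1 h.2.1).choose \ F)
    else (∅, ∅) with hΦ
  have hΦ1 : ∀ F, (h : IsKForestOf G k F) → F ⊆ (Φ F).1 ∧ IsSpanningTreeOf G (Φ F).1 ∧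
      (Φ F).2 = (Φ F).1 \ F := by
    intro F h
    simp only [hΦ, dif_pos h]
    exact ⟨(exists_spanning_tree_ext hG h.1 h.2.1).choose_spec.1,
      (exists_spanning_tree_ext hG h.1 h.2.1).choose_spec.2, trivial⟩
  set P : Set (Set (Sym2 V) × Set (Sym2 V)) :=
    {p | IsSpanningTreeOf G p.1 ∧ p.2 ⊆ p.1 ∧ p.2.ncard = k - 1} with hP
  have hmaps : ∀ F ∈ {F : Set (Sym2 V) | IsKForestOf G k F}, Φ F ∈ P := by
    intro F hF
    obtain ⟨hsub, htreeF, hdiff⟩ := hΦ1 F hF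
    have hFcard : F.ncard + k = N := by
      have := acyclic_card hF.2.1
      rwa [edgeSet_fromEdgeSet_of_subset hF.1, hF.2.2] at this
    have hTcard : (Φ F).1.ncard + 1 = N := htree _ htreeF
    refine ⟨htreeF, by rw [hdiff]; exact Set.diff_subset, ?_⟩
    rw [hdiff, Set.ncard_diff hsub (Set.toFinite _)]
    omega
  have hinj : Set.InjOn Φ {F : Set (Sym2 V) | IsKForestOf G k F} := by
    intro F hF F' hF' heq
    obtain ⟨hsub, _, hdiff⟩ := hΦ1 F hF
    obtain ⟨hsub', _, hdiff'⟩ := hΦ1 F' hF'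
    have h1 : (Φ F).1 \ (Φ F).2 = F := by rw [hdiff, Set.diff_diff_cancel_left hsub]
    have h2 : (Φ F').1 \ (Φ F').2 = F' := by rw [hdiff', Set.diff_diff_cancel_left hsub']
    rw [← h1, ← h2, heq]
  have step1 : {F : Set (Sym2 V) | IsKForestOf G k F}.ncard ≤ P.ncard :=
    Set.ncard_le_ncard_of_injOn Φ hmaps hinj (Set.toFinite _)
  refine step1.trans ?_
  -- now bound P.ncard
  set Tset : Set (Set (Sym2 V)) := {T | IsSpanningTreeOf G T} with hTset
  have hPfin : P.Finite := Set.toFinite _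
  have hTfin : Tset.Finite := Set.toFinite _
  set Pfin := hPfin.toFinset with hPfin'
  set Tfin := hTfin.toFinset with hTfin'
  have hsubset : Pfin ⊆ Tfin.biUnion (fun T =>
      (((Set.toFinite T).toFinset.powersetCard (k - 1)).image
        (fun s : Finset (Sym2 V) => ((T, (↑s : Set (Sym2 V))) : Set (Sym2 V) × Set (Sym2 V))))) := by
    intro p hp
    rw [Set.Finite.mem_toFinset] at hp
    obtain ⟨hp1, hp2, hp3⟩ := hp
    rw [Finset.mem_biUnion]
    refine ⟨p.1, hTfin.mem_toFinset.mpr hp1, ?_⟩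
    rw [Finset.mem_image]
    refine ⟨(Set.toFinite p.2).toFinset, ?_, ?_⟩
    · rw [Finset.mem_powersetCard]
      constructor
      · intro e he
        rw [Set.Finite.mem_toFinset] at he ⊢
        exact hp2 he
      · rw [← Set.ncard_eq_toFinset_card _ (Set.toFinite p.2)]
        exact hp3
    · rw [Set.Finite.coe_toFinset]
  have hcount : Pfin.card ≤ Nat.choose (N - 1) (k - 1) * Tfin.card := by
    calc Pfin.card ≤ _ := Finset.card_le_card hsubset
    _ ≤ ∑ T ∈ Tfin, (((Set.toFinite T).toFinset.powersetCard (k - 1)).image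
        (fun s : Finset (Sym2 V) => ((T, (↑s : Set (Sym2 V))) : Set (Sym2 V) × Set (Sym2 V)))).card :=
      Finset.card_biUnion_le
    _ ≤ ∑ _T ∈ Tfin, Nat.choose (N - 1) (k - 1) := by
      refine Finset.sum_le_sum ?_
      intro T hT
      refine (Finset.card_image_le).trans ?_
      rw [Finset.card_powersetCard, ← Set.ncard_eq_toFinset_card _ (Set.toFinite T)]
      have := htree T (hTfin.mem_toFinset.mp hT)
      have : T.ncard = N - 1 := by omega
      rw [this]
    _ = Nat.choose (N - 1) (k - 1) * Tfin.card := by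
      rw [Finset.sum_const, smul_eq_mul, mul_comm]
  rw [Set.ncard_eq_toFinset_card _ hPfin, Set.ncard_eq_toFinset_card _ hTfin]
  exact hcount

end Aux

/-- A connected graph `G` with `N` vertices has at most `C(N−1, k−1)` times as many
`k`-forests as spanning trees. -/
theorem stmt5 {V : Type*} [Fintype V] (G : SimpleGraph V) (hG : G.Connected)
    (k : ℕ) (hk : 1 ≤ k) :
    {F : Set (Sym2 V) | IsKForestOf G k F}.ncard ≤
      Nat.choose (Fintype.card V - 1) (k - 1) *
        {T : Set (Sym2 V) | IsSpanningTreeOf G T}.ncard := by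
  exact stmt5' G hG k hk
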